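/- arXiv:1910.03893 — 2 statements merged into one kernel-verified Lean document; each statement's English description precedes it below -/
import Mathlib

section
/- Let Ω ⊆ ℝⁿ and let φ, ψ ∈ Φ_w(Ω) be generalized weak Φ-functions with φ ≃ ψ. If φ satisfies (A1)_Ω, then ψ satisfies (A1)_Ω (with a possibly different constant β). In other words, the condition (A1)_Ω is invariant under equivalence of generalized weak Φ-functions. -/
open MeasureTheory ENNReal Metric Set Filter NNReal

noncomputable section

/-- The left-inverse `φ⁻¹(τ) = inf {t ≥ 0 : φ(t) ≥ τ}` of `φ : [0,∞) → [0,∞]`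
(the infimum of the empty set being `∞`). -/
def leftInv (φ : ℝ≥0 → ℝ≥0∞) (τ : ℝ≥0∞) : ℝ≥0∞ :=
  ⨅ t : {t : ℝ≥0 // τ ≤ φ t}, (t : ℝ≥0∞)

/-- `(aInc)_p` with almost-increasing constant `a`: `t ↦ φ(t)/t^p` is almost increasing. -/
def AIncOn (φ : ℝ≥0 → ℝ≥0∞) (p : ℝ) (a : ℝ≥0∞) : Prop :=
  ∀ s t : ℝ≥0, 0 < s → s < t → φ s / (s : ℝ≥0∞) ^ p ≤ a * (φ t / (t : ℝ≥0∞) ^ p)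

/-- `(aDec)_q` with almost-decreasing constant `a`: `t ↦ φ(t)/t^q` is almost decreasing. -/
def ADecOn (φ : ℝ≥0 → ℝ≥0∞) (q : ℝ) (a : ℝ≥0∞) : Prop :=
  ∀ s t : ℝ≥0, 0 < s → s < t → φ t / (t : ℝ≥0∞) ^ q ≤ a * (φ s / (s : ℝ≥0∞) ^ q)

/-- A weak Φ-function with almost-increasing constant `a` for `t ↦ φ(t)/t`. -/
def IsWeakPhiWith (a : ℝ≥0∞) (φ : ℝ≥0 → ℝ≥0∞) : Prop :=
  Monotone φ ∧ φ 0 = 0 ∧ Tendsto φ (nhdsWithin 0 (Set.Ioi 0)) (nhds 0) ∧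
    Tendsto φ atTop (nhds ∞) ∧ 1 ≤ a ∧ AIncOn φ 1 a

/-- A weak Φ-function. -/
def IsWeakPhi (φ : ℝ≥0 → ℝ≥0∞) : Prop := ∃ a : ℝ≥0∞, IsWeakPhiWith a φ

/-- Euclidean space `ℝⁿ`. -/
abbrev En (n : ℕ) := EuclideanSpace ℝ (Fin n)

/-- A generalized weak Φ-function on `Ω ⊆ ℝⁿ`: `x ↦ φ(x,|f(x)|)` is measurable for
measurable `f`, and `φ(y,·)` is a weak Φ-function for a.e. `y ∈ Ω` with the
almost-increasing constant independent of `y`. -/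
def IsGenWeakPhi {n : ℕ} (Ω : Set (En n)) (φ : En n → ℝ≥0 → ℝ≥0∞) : Prop :=
  (∀ f : En n → ℝ≥0, Measurable f → Measurable fun x : Ω => φ x (f x)) ∧
  ∃ a : ℝ≥0∞, ∀ᵐ y ∂(volume.restrict Ω), IsWeakPhiWith a (φ y)

/-- Condition (A0) with constant `β`. -/
def A0With {n : ℕ} (β : ℝ) (Ω : Set (En n)) (φ : En n → ℝ≥0 → ℝ≥0∞) : Prop :=
  ∀ᵐ x ∂(volume.restrict Ω),
    ENNReal.ofReal β ≤ leftInv (φ x) 1 ∧ leftInv (φ x) 1 ≤ ENNReal.ofReal (1 / β)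

/-- Condition (A0). -/
def A0 {n : ℕ} (Ω : Set (En n)) (φ : En n → ℝ≥0 → ℝ≥0∞) : Prop :=
  ∃ β : ℝ, 0 < β ∧ β ≤ 1 ∧ A0With β Ω φ

/-- Condition (A1) with constant `β`. -/
def A1With {n : ℕ} (β : ℝ) (Ω : Set (En n)) (φ : En n → ℝ≥0 → ℝ≥0∞) : Prop :=
  ∀ (z : En n) (r : ℝ), 0 < r → volume (Metric.ball z r) ≤ 1 →
    ∀ᵐ x ∂(volume.restrict (Metric.ball z r ∩ Ω)),
      ∀ᵐ y ∂(volume.restrict (Metric.ball z r ∩ Ω)),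
        ∀ t : ℝ, 1 ≤ t → ENNReal.ofReal t ≤ (volume (Metric.ball z r))⁻¹ →
          ENNReal.ofReal β * leftInv (φ x) (ENNReal.ofReal t)
            ≤ leftInv (φ y) (ENNReal.ofReal t)

/-- Condition (A1). -/
def A1 {n : ℕ} (Ω : Set (En n)) (φ : En n → ℝ≥0 → ℝ≥0∞) : Prop :=
  ∃ β : ℝ, 0 < β ∧ β < 1 ∧ A1With β Ω φ

/-- Condition (A2). -/
def A2 {n : ℕ} (Ω : Set (En n)) (φ : En n → ℝ≥0 → ℝ≥0∞) : Prop :=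
  ∀ s : ℝ, 0 < s → ∃ (β : ℝ) (h : En n → ℝ), 0 < β ∧ β ≤ 1 ∧
    MemLp h 1 (volume.restrict Ω) ∧ MemLp h ⊤ (volume.restrict Ω) ∧
    ∀ᵐ x ∂(volume.restrict Ω), ∀ᵐ y ∂(volume.restrict Ω),
      ∀ t : ℝ, h x + h y ≤ t → t ≤ s →
        ENNReal.ofReal β * leftInv (φ x) (ENNReal.ofReal t)
          ≤ leftInv (φ y) (ENNReal.ofReal t)

lemma leftInv_le_mul (c : ℝ≥0) (hc : c ≠ 0) (φ ψ : ℝ≥0 → ℝ≥0∞) (τ : ℝ≥0∞)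
    (h : ∀ t : ℝ≥0, τ ≤ ψ t → τ ≤ φ (c * t)) :
    leftInv φ τ ≤ (c : ℝ≥0∞) * leftInv ψ τ := by
  rw [leftInv, leftInv, ENNReal.mul_iInf_of_ne (by exact_mod_cast hc) coe_ne_top]
  refine le_iInf fun ⟨t, ht⟩ => ?_
  exact iInf_le_of_le ⟨c * t, h t ht⟩ (by push_cast; rfl)

lemma key_real (β L e : ℝ) (hβ : 0 < β) (hL : 1 ≤ L) (he : 1 ≤ e) :
    (β / L ^ 2) ^ e * L ^ 2 ≤ β ^ e := by
  have hL0 : (0:ℝ) < L := lt_of_lt_of_le one_pos hL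
  have h2 : (1:ℝ) ≤ L ^ 2 := one_le_pow₀ hL
  rw [Real.div_rpow hβ.le (by positivity), div_mul_eq_mul_div,
    div_le_iff₀ (by positivity)]
  have h3 : (L ^ 2) ≤ (L ^ 2) ^ e := by
    simpa using Real.rpow_le_rpow_of_exponent_le h2 he
  have h4 : (0:ℝ) ≤ β ^ e := Real.rpow_nonneg hβ.le e
  nlinarith

lemma key_ennreal (β L e : ℝ) (hβ : 0 < β) (hL : 1 ≤ L) (he : 1 ≤ e) :
    ENNReal.ofReal ((β / L ^ 2) ^ e) * ENNReal.ofReal (L ^ 2)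
      ≤ ENNReal.ofReal (β ^ e) := by
  rw [← ENNReal.ofReal_mul (Real.rpow_nonneg (by positivity) e)]
  exact ENNReal.ofReal_le_ofReal (key_real β L e hβ hL he)

/-- Condition (A1)_Ω with constant `β`:
`β^(|x−y| t^(1/n) + 1) φ⁻¹(y,t) ≤ φ⁻¹(x,t)` for all `x, y ∈ Ω` and `t ≥ 1`. -/
def A1OmegaWith {n : ℕ} (β : ℝ) (Ω : Set (En n)) (φ : En n → ℝ≥0 → ℝ≥0∞) : Prop :=
  ∀ x ∈ Ω, ∀ y ∈ Ω, ∀ t : ℝ, 1 ≤ t →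
    ENNReal.ofReal (β ^ (dist x y * t ^ ((1 : ℝ) / n) + 1)) *
        leftInv (φ y) (ENNReal.ofReal t)
      ≤ leftInv (φ x) (ENNReal.ofReal t)

/-- Condition (A1)_Ω. -/
def A1Omega {n : ℕ} (Ω : Set (En n)) (φ : En n → ℝ≥0 → ℝ≥0∞) : Prop :=
  ∃ β : ℝ, 0 < β ∧ β ≤ 1 ∧ A1OmegaWith β Ω φ

/-- Equivalence `φ ≃ ψ` of generalized Φ-functions on `Ω`. -/
def PhiEquivOn {n : ℕ} (Ω : Set (En n)) (φ ψ : En n → ℝ≥0 → ℝ≥0∞) : Prop :=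
  ∃ L : ℝ≥0, 1 ≤ L ∧ ∀ x ∈ Ω, ∀ t : ℝ≥0, φ x (t / L) ≤ ψ x t ∧ ψ x t ≤ φ x (L * t)

/-- (A1)_Ω is invariant under equivalence of generalized weak Φ-functions. -/
theorem a1Omega_invariant_under_equivalence {n : ℕ} (Ω : Set (En n))
    (φ ψ : En n → ℝ≥0 → ℝ≥0∞) (hφ : IsGenWeakPhi Ω φ) (hψ : IsGenWeakPhi Ω ψ)
    (hequiv : PhiEquivOn Ω φ ψ) (hA1Ω : A1Omega Ω φ) :
    A1Omega Ω ψ := by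
  obtain ⟨β, hβ0, hβ1, hA⟩ := hA1Ω
  obtain ⟨L, hL1, hL⟩ := hequiv
  have hL1' : (1:ℝ) ≤ (L:ℝ) := by exact_mod_cast hL1
  have hL0 : (0:ℝ) < (L:ℝ) := lt_of_lt_of_le one_pos hL1'
  have hLne : L ≠ 0 := by exact_mod_cast hL0.ne'
  have hLEne : (L:ℝ≥0∞) ≠ 0 := by exact_mod_cast hLne
  refine ⟨β / (L:ℝ)^2, by positivity, ?_, ?_⟩
  · rw [div_le_one (by positivity)]
    exact hβ1.trans (one_le_pow₀ hL1')
  intro x hx y hy t ht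
  set τ := ENNReal.ofReal t with hτ
  set e := dist x y * t ^ ((1:ℝ)/n) + 1 with he_def
  have he : 1 ≤ e := by
    have h1 : 0 ≤ dist x y := dist_nonneg
    have h2 : (0:ℝ) ≤ t ^ ((1:ℝ)/n) :=
      Real.rpow_nonneg (le_trans zero_le_one ht) _
    rw [he_def]
    nlinarith
  have h1 : leftInv (φ x) τ ≤ (L:ℝ≥0∞) * leftInv (ψ x) τ :=
    leftInv_le_mul L hLne _ _ τ fun s hs => hs.trans (hL x hx s).2
  have h2 : leftInv (ψ y) τ ≤ (L:ℝ≥0∞) * leftInv (φ y) τ := by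
    refine leftInv_le_mul L hLne _ _ τ fun s hs => hs.trans ?_
    have := (hL y hy (L * s)).1
    rwa [mul_div_cancel_left₀ s hLne] at this
  have hAxy := hA x hx y hy t ht
  have hsq : ENNReal.ofReal ((L:ℝ)^2) = (L:ℝ≥0∞)^2 := by
    rw [ENNReal.ofReal_pow L.coe_nonneg, ENNReal.ofReal_coe_nnreal]
  rw [← ENNReal.mul_le_mul_iff_right hLEne coe_ne_top]
  calc (L:ℝ≥0∞) * (ENNReal.ofReal ((β / (L:ℝ)^2) ^ e) * leftInv (ψ y) τ)
      ≤ (L:ℝ≥0∞) * (ENNReal.ofReal ((β / (L:ℝ)^2) ^ e) *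
          ((L:ℝ≥0∞) * leftInv (φ y) τ)) := by
        exact mul_le_mul_right (mul_le_mul_right h2 _) _
    _ = (ENNReal.ofReal ((β / (L:ℝ)^2) ^ e) * (L:ℝ≥0∞)^2) * leftInv (φ y) τ := by
        ring
    _ ≤ ENNReal.ofReal (β ^ e) * leftInv (φ y) τ := by
        rw [← hsq]; exact mul_le_mul_left (key_ennreal β L e hβ0 hL1' he) _
    _ ≤ leftInv (φ x) τ := hAxy
    _ ≤ (L:ℝ≥0∞) * leftInv (ψ x) τ := h1
end
end

section
/- Let Ω ⊆ ℝⁿ be open, let D ⊆ Ω be dense in Ω, and let φ ∈ Φ_w(Ω) satisfy (A1)_Ω with constant β ∈ (0,1]. Then for every x ∈ Ω and every t > 1, β φ⁻¹(x,t) ≤ inf_{y ∈ D} β^{−|x−y| t^{1/n}} φ⁻¹(y,t) ≤ (1/β) φ⁻¹(x,t). -/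
open MeasureTheory ENNReal Metric Set Filter NNReal

noncomputable section

/-- for `Ω` open, `D ⊆ Ω` dense in `Ω` and `φ` satisfying (A1)_Ω with
constant `β`, for every `x ∈ Ω` and `t > 1`,
`β φ⁻¹(x,t) ≤ inf_{y ∈ D} β^(−|x−y| t^(1/n)) φ⁻¹(y,t) ≤ (1/β) φ⁻¹(x,t)`. -/
theorem inf_comparable_on_dense {n : ℕ} (Ω D : Set (En n)) (hΩ : IsOpen Ω)
    (hDΩ : D ⊆ Ω) (hdense : Ω ⊆ closure D)
    (φ : En n → ℝ≥0 → ℝ≥0∞) (hφ : IsGenWeakPhi Ω φ)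
    (β : ℝ) (hβ0 : 0 < β) (hβ1 : β ≤ 1) (hA1Ω : A1OmegaWith β Ω φ) :
    ∀ x ∈ Ω, ∀ t : ℝ, 1 < t →
      ENNReal.ofReal β * leftInv (φ x) (ENNReal.ofReal t) ≤
        (⨅ y ∈ D, ENNReal.ofReal (β ^ (-(dist x y * t ^ ((1 : ℝ) / n)))) *
          leftInv (φ y) (ENNReal.ofReal t)) ∧
      (⨅ y ∈ D, ENNReal.ofReal (β ^ (-(dist x y * t ^ ((1 : ℝ) / n)))) *
          leftInv (φ y) (ENNReal.ofReal t)) ≤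
        ENNReal.ofReal (1 / β) * leftInv (φ x) (ENNReal.ofReal t) := by
  intro x hx t ht
  set T : ℝ := t ^ ((1 : ℝ) / n) with hT
  set C : ℝ≥0∞ := leftInv (φ x) (ENNReal.ofReal t) with hC
  have hof : ∀ a b : ℝ, ENNReal.ofReal (β ^ a) * ENNReal.ofReal (β ^ b)
      = ENNReal.ofReal (β ^ (a + b)) := by
    intro a b
    rw [← ENNReal.ofReal_mul (Real.rpow_nonneg hβ0.le a), ← Real.rpow_add hβ0]
  constructor
  · refine le_iInf₂ fun y hy => ?_
    have h := hA1Ω y (hDΩ hy) x hx t ht.le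
    have h2 := mul_le_mul_right h (ENNReal.ofReal (β ^ (-(dist x y * T))))
    calc ENNReal.ofReal β * C
        = ENNReal.ofReal (β ^ (-(dist x y * T))) *
            (ENNReal.ofReal (β ^ (dist y x * T + 1)) * C) := by
          rw [← mul_assoc, hof, dist_comm y x]
          have he : -(dist x y * T) + (dist x y * T + 1) = 1 := by ring
          rw [he, Real.rpow_one]
      _ ≤ ENNReal.ofReal (β ^ (-(dist x y * T))) *
            leftInv (φ y) (ENNReal.ofReal t) := h2
  · rcases eq_or_ne C ∞ with hCtop | hCfin
    · rw [hCtop, ENNReal.mul_top (by simp [ENNReal.ofReal_eq_zero]; positivity)]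
      exact le_top
    have hseq : ∀ k : ℕ, ∃ y ∈ D, dist x y < 1 / (k + 1) := fun k =>
      Metric.mem_closure_iff.mp (hdense hx) _ (by positivity)
    choose y hyD hyd using hseq
    have hdist0 : Tendsto (fun k : ℕ => dist x (y k)) atTop (nhds 0) := by
      refine squeeze_zero (fun k => dist_nonneg) (fun k => (hyd k).le) ?_
      exact tendsto_one_div_add_atTop_nhds_zero_nat
    have hexp : Tendsto (fun k : ℕ => -(2 * (dist x (y k) * T) + 1)) atTop
        (nhds (-1 : ℝ)) := by
      have : Tendsto (fun k : ℕ => 2 * (dist x (y k) * T) + 1) atTop (nhds 1) := by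
        have h1 : Tendsto (fun k : ℕ => 2 * (dist x (y k) * T)) atTop (nhds 0) := by
          simpa using ((hdist0.mul_const T).const_mul 2)
        simpa using h1.add tendsto_const_nhds
      simpa using this.neg
    have htend : Tendsto
        (fun k : ℕ => ENNReal.ofReal (β ^ (-(2 * (dist x (y k) * T) + 1))) * C)
        atTop (nhds (ENNReal.ofReal (1 / β) * C)) := by
      have h1 : Tendsto (fun k : ℕ => β ^ (-(2 * (dist x (y k) * T) + 1)))
          atTop (nhds (β ^ (-1 : ℝ))) :=
        (Real.continuousAt_const_rpow hβ0.ne').tendsto.comp hexp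
      have h2 : (β : ℝ) ^ (-1 : ℝ) = 1 / β := by
        rw [Real.rpow_neg_one]; exact (one_div β).symm
      rw [← h2]
      exact ENNReal.Tendsto.mul_const (ENNReal.continuous_ofReal.tendsto _ |>.comp h1) (Or.inr hCfin)
    refine ge_of_tendsto htend (Filter.Eventually.of_forall fun k => ?_)
    have hbd : ENNReal.ofReal (β ^ (-(dist x (y k) * T))) *
        leftInv (φ (y k)) (ENNReal.ofReal t)
        ≤ ENNReal.ofReal (β ^ (-(2 * (dist x (y k) * T) + 1))) * C := by
      have h := hA1Ω x hx (y k) (hDΩ (hyD k)) t ht.le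
      calc ENNReal.ofReal (β ^ (-(dist x (y k) * T))) *
            leftInv (φ (y k)) (ENNReal.ofReal t)
          = ENNReal.ofReal (β ^ (-(2 * (dist x (y k) * T) + 1))) *
              (ENNReal.ofReal (β ^ (dist x (y k) * T + 1)) *
                leftInv (φ (y k)) (ENNReal.ofReal t)) := by
            rw [← mul_assoc, hof]
            have he : -(2 * (dist x (y k) * T) + 1) + (dist x (y k) * T + 1)
                = -(dist x (y k) * T) := by ring
            rw [he]
        _ ≤ ENNReal.ofReal (β ^ (-(2 * (dist x (y k) * T) + 1))) * C :=
            mul_le_mul_right h _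
    exact le_trans (iInf₂_le (y k) (hyD k)) hbd
end
end
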